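/- Let p ≥ 1 be an integer, H > 0 and β ∈ [0, 1/p]. Let x_k, υ_k ∈ E, u_k = υ_k − x_k, and let 0 ≤ τ¹ ≤ τ² ≤ 1, y¹ = x_k + τ¹u_k, y² = x_k + τ²u_k. Let ĝ be a subgradient of ψ at T¹ with (T¹, ĝ) ∈ A(y¹, β) and let g̃ be a subgradient of ψ at T² with (T², g̃) ∈ A(y², β). Set β¹ = ⟨∇f(T¹) + ĝ, u_k⟩ and β² = ⟨∇f(T²) + g̃, u_k⟩, and assume β¹ ≤ 0 ≤ β² with β² − β¹ > 0. Set α = β²/(β² − β¹) and g_k = (α‖∇f(T¹) + ĝ‖^{(p+1)/p} + (1−α)‖∇f(T²) + g̃‖^{(p+1)/p})^{p/(p+1)}, and assume α(τ¹ − τ²)β¹ ≤ (1/2)((1−β)/H)^{1/p} g_k^{(p+1)/p}. Set x_{k+1} = αT¹ + (1−α)T² and 𝓛_k(x) = α(f(T¹) + ⟨∇f(T¹), x − T¹⟩) + (1−α)(f(T²) + ⟨∇f(T²), x − T²⟩) + ψ(x). Then F(x_k) ≥ 𝓛_k(x_k) ≥ F(x_{k+1}) + (1/2)((1−β)/H)^{1/p}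 g_k^{(p+1)/p}. -/

import Mathlib

open scoped RealInnerProductSpace

variable {E : Type*} [NormedAddCommGroup E] [InnerProductSpace ℝ E] [FiniteDimensional ℝ E]

/-- `g` is a subgradient of `ψ` at `T`. -/
def IsSubgrad (ψ : E → ℝ) (T g : E) : Prop := ∀ y, ψ T + ⟪g, y - T⟫ ≤ ψ y

/-- `(T, g)` is an acceptable solution of the `p`-th order proximal-point problem at `xbar`,
i.e. `(T, g) ∈ A(xbar, β)`. -/
def InA (f' : E → E) (ψ : E → ℝ) (p : ℕ) (H β : ℝ) (xbar T g : E) : Prop :=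
  IsSubgrad ψ T g ∧
    ‖f' T + g + (H * ‖T - xbar‖ ^ (p - 1)) • (T - xbar)‖ ≤ β * ‖f' T + g‖

lemma grad_ineq {E : Type*} [NormedAddCommGroup E] [InnerProductSpace ℝ E] [CompleteSpace E]
    (f : E → ℝ) (f' : E → E) (hf : ConvexOn ℝ Set.univ f)
    (hf' : ∀ x, HasGradientAt f (f' x) x) (T x : E) :
    f T + ⟪f' T, x - T⟫ ≤ f x := by
  set φ : ℝ → ℝ := fun t => f (T + t • (x - T)) with hφ
  have hconv : ConvexOn ℝ Set.univ φ := by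
    refine ⟨convex_univ, fun s _ t _ a b ha hb hab => ?_⟩
    have h := hf.2 (Set.mem_univ (T + s • (x - T))) (Set.mem_univ (T + t • (x - T))) ha hb hab
    have he : a • (T + s • (x - T)) + b • (T + t • (x - T)) = T + (a * s + b * t) • (x - T) := by
      have h1 : a + b = 1 := hab
      match_scalars <;> simp <;> linarith
    rw [he] at h
    simpa [φ, smul_eq_mul] using h
  have hline : HasDerivAt (fun t : ℝ => T + t • (x - T)) (x - T) 0 := by
    simpa using ((hasDerivAt_id (0 : ℝ)).smul_const (x - T)).const_add T
  have hcomp : HasDerivAt φ ⟪f' T, x - T⟫ 0 := by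
    have h2 : HasFDerivAt f (InnerProductSpace.toDual ℝ E (f' T)) (T + (0 : ℝ) • (x - T)) := by
      rw [show T + (0 : ℝ) • (x - T) = T by simp]
      exact hasGradientAt_iff_hasFDerivAt.mp (hf' T)
    have := h2.comp_hasDerivAt 0 hline
    simp [φ, Function.comp, InnerProductSpace.toDual_apply_apply] at this; exact this
  have hs := hconv.le_slope_of_hasDerivAt (Set.mem_univ (0 : ℝ)) (Set.mem_univ (1 : ℝ))
    one_pos hcomp
  rw [slope_def_field] at hs
  simp only [φ] at hs
  norm_num at hs
  linarith

set_option maxHeartbeats 1000000 in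
lemma key_ineq {E : Type*} [NormedAddCommGroup E] [InnerProductSpace ℝ E]
    (p : ℕ) (hp : 1 ≤ p) (H β : ℝ) (hH : 0 < H) (hβ0 : 0 ≤ β) (hpβ : (p : ℝ) * β ≤ 1)
    (y T h : E) (hacc : ‖h + (H * ‖T - y‖ ^ (p - 1)) • (T - y)‖ ≤ β * ‖h‖) :
    ((1 - β) / H) ^ ((1 : ℝ) / p) * ‖h‖ ^ (((p : ℝ) + 1) / p) ≤ ⟪h, y - T⟫ := by
  have hp0 : (0 : ℝ) < p := by exact_mod_cast hp
  have hpne : (p : ℝ) ≠ 0 := ne_of_gt hp0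
  have hp1 : (1 : ℝ) ≤ p := by exact_mod_cast hp
  have hβ1 : β ≤ 1 := by nlinarith [mul_le_mul_of_nonneg_right hp1 hβ0]
  set r : ℝ := ‖T - y‖ with hr_def
  set n : ℝ := ‖h‖ with hn_def
  set s : ℝ := H * r ^ (p - 1) with hs_def
  have hr0 : 0 ≤ r := norm_nonneg _
  have hn0 : 0 ≤ n := norm_nonneg _
  have hs0 : 0 ≤ s := mul_nonneg hH.le (pow_nonneg hr0 _)
  have hsr : s * r = H * r ^ p := by
    rw [hs_def, mul_assoc, ← pow_succ, Nat.sub_add_cancel hp]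
  have hq : ⟪h, T - y⟫ = -⟪h, y - T⟫ := by rw [← neg_sub y T, inner_neg_right]
  have hsq : n ^ 2 + 2 * (s * ⟪h, T - y⟫) + (s * r) ^ 2 ≤ (β * n) ^ 2 := by
    have h1 : ‖h + s • (T - y)‖ ^ 2 ≤ (β * n) ^ 2 :=
      pow_le_pow_left₀ (norm_nonneg _) hacc 2
    have h2 : ‖h + s • (T - y)‖ ^ 2 = n ^ 2 + 2 * (s * ⟪h, T - y⟫) + (s * r) ^ 2 := by
      rw [norm_add_sq_real, real_inner_smul_right, norm_smul, Real.norm_eq_abs,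
        abs_of_nonneg hs0]
    linarith [h2 ▸ h1]
  have key1 : (1 - β ^ 2) * n ^ 2 + (s * r) ^ 2 ≤ 2 * s * ⟪h, y - T⟫ := by
    rw [hq] at hsq; nlinarith [hsq]
  have key2 : (1 - β) * n ≤ H * r ^ p := by
    have h1 : n ≤ ‖h + s • (T - y)‖ + ‖s • (T - y)‖ := by
      calc n = ‖(h + s • (T - y)) + (-(s • (T - y)))‖ := by rw [add_neg_cancel_right]
        _ ≤ ‖h + s • (T - y)‖ + ‖-(s • (T - y))‖ := norm_add_le _ _
        _ = ‖h + s • (T - y)‖ + ‖s • (T - y)‖ := by rw [norm_neg]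
    have h2 : ‖s • (T - y)‖ = s * r := by
      rw [norm_smul, Real.norm_eq_abs, abs_of_nonneg hs0]
    rw [← hsr]; nlinarith [h1, h2, hacc]
  rcases eq_or_lt_of_le hn0 with hn | hn
  · -- n = 0
    have hh : h = 0 := norm_eq_zero.mp (hn_def.symm.trans hn.symm)
    have hq0 : ⟪h, y - T⟫ = (0 : ℝ) := by rw [hh]; exact inner_zero_left _
    rw [hq0, ← hn, Real.zero_rpow (by positivity : ((p : ℝ) + 1) / p ≠ 0), mul_zero]
  rcases eq_or_lt_of_le hr0 with hr | hr
  · -- r = 0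
    have hT : T - y = 0 := norm_eq_zero.mp (hr_def.symm.trans hr.symm)
    have hyT : y - T = 0 := by rw [← neg_sub T y, hT, neg_zero]
    rw [hyT, inner_zero_right]
    have hrp : r ^ p = 0 := by rw [← hr]; exact zero_pow (by omega)
    have hb : (1 : ℝ) - β = 0 := by nlinarith [key2]
    rw [hb, zero_div, Real.zero_rpow (by positivity : (1 : ℝ) / p ≠ 0), zero_mul]
  -- now n > 0, r > 0
  clear_value r n s
  clear hacc hsq hq
  have hs : 0 < s := by rw [hs_def]; exact mul_pos hH (pow_pos hr _)
  rcases lt_or_ge β 1 with hβlt | hβge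
  swap
  · -- β = 1 case
    have hβe : β = 1 := by linarith
    subst hβe
    norm_num
    rw [Real.zero_rpow (by positivity : ((p:ℝ))⁻¹ ≠ 0), zero_mul]
    nlinarith [key1, mul_pos hs hr, sq_nonneg (s * r)]
  -- main case β < 1
  obtain ⟨a, ha_def⟩ : ∃ a : ℝ, a = (1 - β) * n / H := ⟨_, rfl⟩
  have ha : 0 < a := by rw [ha_def]; exact div_pos (mul_pos (by linarith) hn) hH
  have hHa : H * a = (1 - β) * n := by rw [ha_def]; field_simp
  obtain ⟨t, ht_def⟩ : ∃ t : ℝ, t = r ^ p / a := ⟨_, rfl⟩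
  have ht0 : 0 < t := by rw [ht_def]; exact div_pos (pow_pos hr _) ha
  have hta : r ^ p = t * a := by rw [ht_def]; exact (div_mul_cancel₀ _ (ne_of_gt ha)).symm
  have ht1 : 1 ≤ t := by
    rw [ht_def, one_le_div ha, ha_def, div_le_iff₀ hH]
    linarith [key2]
  obtain ⟨θ, hθ_def⟩ : ∃ θ : ℝ, θ = 1 - 1 / p := ⟨_, rfl⟩
  have hθ0 : 0 ≤ θ := by
    rw [hθ_def]
    have : 1 / (p : ℝ) ≤ 1 := by rw [div_le_one hp0]; exact hp1
    linarith
  have hr_eq : r = (t * a) ^ ((p : ℝ)⁻¹) := by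
    rw [← hta]; exact (Real.pow_rpow_inv_natCast hr0 (by omega)).symm
  have hcast : ((p - 1 : ℕ) : ℝ) = (p : ℝ) - 1 := by
    rw [Nat.cast_sub hp]; norm_num
  have hrp1 : r ^ (p - 1) = (t * a) ^ θ := by
    rw [hr_eq, ← Real.rpow_natCast ((t * a) ^ ((p : ℝ)⁻¹)) (p - 1),
      ← Real.rpow_mul (by positivity)]
    congr 1
    rw [hcast, hθ_def]
    field_simp
  have key3 : s * a ^ ((p : ℝ)⁻¹) = t ^ θ * ((1 - β) * n) := by
    rw [hs_def, hrp1, Real.mul_rpow ht0.le ha.le]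
    rw [show H * (t ^ θ * a ^ θ) * a ^ ((p : ℝ)⁻¹) = t ^ θ * (H * (a ^ θ * a ^ ((p : ℝ)⁻¹)))
      by ring]
    rw [← Real.rpow_add ha, show θ + (p : ℝ)⁻¹ = 1 by rw [hθ_def]; field_simp; ring, Real.rpow_one,
      hHa]
  have htθ : t ^ θ ≤ θ * t + 1 / p := by
    have := Real.geom_mean_le_arith_mean2_weighted hθ0 (by positivity : (0:ℝ) ≤ 1 / p)
      ht0.le zero_le_one (by rw [hθ_def]; ring)
    simpa using this
  have hβinv : β ≤ 1 / (p : ℝ) := by rw [le_div_iff₀ hp0]; linarith [hpβ]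
  have quad : 2 * (θ * t + 1 / p) ≤ (1 + β) + (1 - β) * t ^ 2 := by
    have e : (1 + β) + (1 - β) * t ^ 2 - 2 * (θ * t + 1 / p) =
        (1 - β) * (t - 1) ^ 2 + 2 * ((1 / p - β) * (t - 1)) := by
      rw [hθ_def]; ring
    nlinarith [mul_nonneg (show (0:ℝ) ≤ 1 - β by linarith) (sq_nonneg (t - 1)),
      mul_nonneg (sub_nonneg.mpr hβinv) (sub_nonneg.mpr ht1), e]
  have h2tθ : 2 * t ^ θ ≤ (1 + β) + (1 - β) * t ^ 2 := by linarith
  have hsr2 : (s * r) ^ 2 = (t * ((1 - β) * n)) ^ 2 := by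
    rw [hsr, hta, show H * (t * a) = t * (H * a) by ring, hHa]
  have hcn : 0 ≤ (1 - β) * n * n := mul_nonneg (mul_nonneg (by linarith) hn0) hn0
  have hm := mul_le_mul_of_nonneg_right h2tθ hcn
  have hmain : 2 * s * (a ^ ((p : ℝ)⁻¹) * n) ≤ 2 * s * ⟪h, y - T⟫ := by
    calc 2 * s * (a ^ ((p : ℝ)⁻¹) * n) = 2 * (s * a ^ ((p : ℝ)⁻¹)) * n := by ring
      _ = 2 * (t ^ θ * ((1 - β) * n)) * n := by rw [key3]
      _ = 2 * t ^ θ * ((1 - β) * n * n) := by ring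
      _ ≤ ((1 + β) + (1 - β) * t ^ 2) * ((1 - β) * n * n) := hm
      _ = (1 - β ^ 2) * n ^ 2 + (t * ((1 - β) * n)) ^ 2 := by ring
      _ = (1 - β ^ 2) * n ^ 2 + (s * r) ^ 2 := by rw [hsr2]
      _ ≤ 2 * s * ⟪h, y - T⟫ := key1
  have hfinal : a ^ ((p : ℝ)⁻¹) * n ≤ ⟪h, y - T⟫ :=
    le_of_mul_le_mul_left (by linarith [hmain]) (by linarith : (0:ℝ) < 2 * s)
  have hgoal : ((1 - β) / H) ^ ((1 : ℝ) / p) * n ^ (((p : ℝ) + 1) / p) =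
      a ^ ((p : ℝ)⁻¹) * n := by
    have h1 : n ^ (((p : ℝ) + 1) / p) = n ^ ((p : ℝ)⁻¹) * n := by
      rw [show ((p : ℝ) + 1) / p = (p : ℝ)⁻¹ + 1 by field_simp; ring,
        Real.rpow_add hn, Real.rpow_one]
    rw [h1, one_div, ← mul_assoc, ← Real.mul_rpow (div_nonneg (by linarith) hH.le) hn0]
    congr 2
    rw [ha_def]; ring
  rw [hgoal]
  exact hfinal

set_option maxHeartbeats 1000000 in
theorem stmt_11 (f ψ : E → ℝ) (f' : E → E)
    (hf : ConvexOn ℝ Set.univ f) (hψ : ConvexOn ℝ Set.univ ψ)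
    (hf' : ∀ x, HasGradientAt f (f' x) x)
    (p : ℕ) (hp : 1 ≤ p) (H β : ℝ) (hH : 0 < H)
    (hβ : β ∈ Set.Icc (0 : ℝ) (1 / (p : ℝ)))
    (xk vk T1 T2 ghat gtil : E) (τ1 τ2 : ℝ)
    (hτ1 : 0 ≤ τ1) (hτ12 : τ1 ≤ τ2) (hτ2 : τ2 ≤ 1)
    (hA1 : InA f' ψ p H β (xk + τ1 • (vk - xk)) T1 ghat)
    (hA2 : InA f' ψ p H β (xk + τ2 • (vk - xk)) T2 gtil)
    (hb1 : ⟪f' T1 + ghat, vk - xk⟫ ≤ 0)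
    (hb2 : 0 ≤ ⟪f' T2 + gtil, vk - xk⟫)
    (hb12 : 0 < ⟪f' T2 + gtil, vk - xk⟫ - ⟪f' T1 + ghat, vk - xk⟫)
    (α gk : ℝ)
    (hα : α = ⟪f' T2 + gtil, vk - xk⟫ /
        (⟪f' T2 + gtil, vk - xk⟫ - ⟪f' T1 + ghat, vk - xk⟫))
    (hgk : gk = (α * ‖f' T1 + ghat‖ ^ (((p : ℝ) + 1) / p) +
        (1 - α) * ‖f' T2 + gtil‖ ^ (((p : ℝ) + 1) / p)) ^ ((p : ℝ) / ((p : ℝ) + 1)))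
    (hcond : α * (τ1 - τ2) * ⟪f' T1 + ghat, vk - xk⟫ ≤
        (1 / 2) * ((1 - β) / H) ^ ((1 : ℝ) / p) * gk ^ (((p : ℝ) + 1) / p))
    (xk1 : E) (hxk1 : xk1 = α • T1 + (1 - α) • T2) :
    f xk + ψ xk ≥
        α * (f T1 + ⟪f' T1, xk - T1⟫) + (1 - α) * (f T2 + ⟪f' T2, xk - T2⟫) + ψ xk ∧
      α * (f T1 + ⟪f' T1, xk - T1⟫) + (1 - α) * (f T2 + ⟪f' T2, xk - T2⟫) + ψ xk ≥
        f xk1 + ψ xk1 +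
          (1 / 2) * ((1 - β) / H) ^ ((1 : ℝ) / p) * gk ^ (((p : ℝ) + 1) / p) := by
  obtain ⟨hβ0, hβp'⟩ := hβ
  have hp0 : (0 : ℝ) < p := by exact_mod_cast hp
  have hpβ : (p : ℝ) * β ≤ 1 := by
    have := (le_div_iff₀ hp0).mp hβp'
    linarith
  have hα0 : 0 ≤ α := by rw [hα]; exact div_nonneg hb2 hb12.le
  have hα1 : α ≤ 1 := by
    rw [hα, div_le_one hb12]
    linarith
  have h1α0 : 0 ≤ 1 - α := by linarith
  have hαb : α * ⟪f' T1 + ghat, vk - xk⟫ + (1 - α) * ⟪f' T2 + gtil, vk - xk⟫ = 0 := by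
    rw [hα]; field_simp; ring
  have e1 := grad_ineq f f' hf hf' T1 xk
  have e2 := grad_ineq f f' hf hf' T2 xk
  constructor
  · have h1 := mul_le_mul_of_nonneg_left e1 hα0
    have h2 := mul_le_mul_of_nonneg_left e2 h1α0
    have : α * f xk + (1 - α) * f xk = f xk := by ring
    linarith
  · -- second inequality
    have key1 := key_ineq p hp H β hH hβ0 hpβ (xk + τ1 • (vk - xk)) T1 (f' T1 + ghat) hA1.2
    have key2 := key_ineq p hp H β hH hβ0 hpβ (xk + τ2 • (vk - xk)) T2 (f' T2 + gtil) hA2.2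
    have dec1 : ⟪f' T1 + ghat, xk + τ1 • (vk - xk) - T1⟫ =
        ⟪f' T1 + ghat, xk - T1⟫ + τ1 * ⟪f' T1 + ghat, vk - xk⟫ := by
      rw [show xk + τ1 • (vk - xk) - T1 = (xk - T1) + τ1 • (vk - xk) by abel,
        inner_add_right, real_inner_smul_right]
    have dec2 : ⟪f' T2 + gtil, xk + τ2 • (vk - xk) - T2⟫ =
        ⟪f' T2 + gtil, xk - T2⟫ + τ2 * ⟪f' T2 + gtil, vk - xk⟫ := by
      rw [show xk + τ2 • (vk - xk) - T2 = (xk - T2) + τ2 • (vk - xk) by abel,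
        inner_add_right, real_inner_smul_right]
    rw [dec1] at key1
    rw [dec2] at key2
    -- subgradient inequalities at xk
    have sub1 := hA1.1 xk
    have sub2 := hA2.1 xk
    -- convexity at xk1
    have cf : f xk1 ≤ α * f T1 + (1 - α) * f T2 := by
      rw [hxk1]
      exact hf.2 (Set.mem_univ T1) (Set.mem_univ T2) hα0 h1α0 (by ring)
    have cψ : ψ xk1 ≤ α * ψ T1 + (1 - α) * ψ T2 := by
      rw [hxk1]
      exact hψ.2 (Set.mem_univ T1) (Set.mem_univ T2) hα0 h1α0 (by ring)
    -- gk ^ κ = S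
    set κ : ℝ := ((p : ℝ) + 1) / p with hκ
    set S : ℝ := α * ‖f' T1 + ghat‖ ^ κ + (1 - α) * ‖f' T2 + gtil‖ ^ κ with hS
    have hS0 : 0 ≤ S :=
      add_nonneg (mul_nonneg hα0 (Real.rpow_nonneg (norm_nonneg _) _))
        (mul_nonneg h1α0 (Real.rpow_nonneg (norm_nonneg _) _))
    have hpne : (p : ℝ) ≠ 0 := ne_of_gt hp0
    have hG : gk ^ κ = S := by
      rw [hgk, ← Real.rpow_mul hS0,
        show ((p : ℝ) / ((p : ℝ) + 1)) * κ = 1 by rw [hκ]; field_simp, Real.rpow_one]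
    set D : ℝ := ((1 - β) / H) ^ ((1 : ℝ) / p) with hD
    have m1 := mul_le_mul_of_nonneg_left key1 hα0
    have m2 := mul_le_mul_of_nonneg_left key2 h1α0
    have s1 := mul_le_mul_of_nonneg_left sub1 hα0
    have s2 := mul_le_mul_of_nonneg_left sub2 h1α0
    have i1 : ⟪f' T1 + ghat, xk - T1⟫ = ⟪f' T1, xk - T1⟫ + ⟪ghat, xk - T1⟫ :=
      inner_add_left _ _ _
    have i2 : ⟪f' T2 + gtil, xk - T2⟫ = ⟪f' T2, xk - T2⟫ + ⟪gtil, xk - T2⟫ :=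
      inner_add_left _ _ _
    have hτb : α * (τ1 * ⟪f' T1 + ghat, vk - xk⟫) +
        (1 - α) * (τ2 * ⟪f' T2 + gtil, vk - xk⟫) =
        α * (τ1 - τ2) * ⟪f' T1 + ghat, vk - xk⟫ := by
      have h9 : (1 - α) * ⟪f' T2 + gtil, vk - xk⟫ = -(α * ⟪f' T1 + ghat, vk - xk⟫) := by
        linarith
      rw [show (1 - α) * (τ2 * ⟪f' T2 + gtil, vk - xk⟫) =
        τ2 * ((1 - α) * ⟪f' T2 + gtil, vk - xk⟫) by ring, h9]
      ring
    have hDS_exp : D * S = α * (D * ‖f' T1 + ghat‖ ^ κ) + (1 - α) * (D * ‖f' T2 + gtil‖ ^ κ) := by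
      rw [hS]; ring
    rw [hG] at hcond ⊢
    rw [i1] at m1
    rw [i2] at m2
    linarith [m1, m2, s1, s2, cf, cψ, hcond, hDS_exp, hτb]
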